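/- Let Γ be a finite simple graph and g an automorphism of Γ. Then the induced action of g on H¹(Γ) is the identity if and only if g restricts to a rotation on each cycle of Γ; precisely, if and only if for every cycle subgraph C of Γ and every choice of cyclic orientation of C with associated cycle form ω_C, one has g*ω_C = ω_C (equivalently, g maps C onto itself preserving the cyclic orientation). -/

import Mathlib

open SimpleGraph Function

open scoped Classical

variable {U V W : Type*}

/-- The space `Ω¹(G)` of edge forms: antisymmetric real functions supported on adjacent pairs. -/
def edgeForms (G : SimpleGraph V) : Submodule ℝ (V → V → ℝ) where
  carrier := {ω | (∀ v w, ω v w = - ω w v) ∧ ∀ v w, ¬ G.Adj v w → ω v w = 0}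
  add_mem' := fun {a b} ha hb => ⟨fun v w => by
      have h1 := ha.1 v w; have h2 := hb.1 v w
      simp only [Pi.add_apply]; linarith,
    fun v w h => by simp only [Pi.add_apply, ha.2 v w h, hb.2 v w h, add_zero]⟩
  zero_mem' := ⟨fun v w => by simp, fun v w h => rfl⟩
  smul_mem' := fun c a ha => ⟨fun v w => by
      simp only [Pi.smul_apply, smul_eq_mul, ha.1 v w]; ring,
    fun v w h => by simp only [Pi.smul_apply, smul_eq_mul, ha.2 v w h, mul_zero]⟩

/-- The coboundary operator `D : Ω⁰(G) → Ω¹(G)`, `(Df)(v,w) = f w - f v` on adjacent pairs. -/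
noncomputable def coboundary (G : SimpleGraph V) : (V → ℝ) →ₗ[ℝ] edgeForms G where
  toFun f := ⟨fun v w => if G.Adj v w then f w - f v else 0, by
    constructor
    · intro v w
      dsimp only
      by_cases h : G.Adj v w
      · rw [if_pos h, if_pos h.symm]; ring
      · rw [if_neg h, if_neg (fun h' => h h'.symm)]; ring
    · intro v w h; dsimp only; rw [if_neg h]⟩
  map_add' f g := Subtype.ext <| funext fun v => funext fun w => by
    by_cases h : G.Adj v w <;> simp [h] <;> ring
  map_smul' c f := Subtype.ext <| funext fun v => funext fun w => by
    by_cases h : G.Adj v w <;> simp [h] <;> ring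

@[simp] lemma coboundary_apply (G : SimpleGraph V) (f : V → ℝ) (v w : V) :
    (coboundary G f : V → V → ℝ) v w = if G.Adj v w then f w - f v else 0 := rfl

/-- `H⁰(G) = ker D`. -/
noncomputable def H0 (G : SimpleGraph V) : Submodule ℝ (V → ℝ) := LinearMap.ker (coboundary G)

/-- `H¹(G) = Ω¹(G) / Im D`. -/
noncomputable abbrev H1 (G : SimpleGraph V) :=
  (edgeForms G) ⧸ (LinearMap.range (coboundary G))

/-- The pullback `F* : Ω¹(G₂) → Ω¹(G₁)` of a graph homomorphism. -/
noncomputable def pullback {G₁ : SimpleGraph U} {G₂ : SimpleGraph V} (F : G₁ →g G₂) :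
    edgeForms G₂ →ₗ[ℝ] edgeForms G₁ where
  toFun ω := ⟨fun v w => if G₁.Adj v w then (ω : V → V → ℝ) (F v) (F w) else 0, by
    constructor
    · intro v w
      dsimp only
      by_cases h : G₁.Adj v w
      · rw [if_pos h, if_pos h.symm, ω.2.1]
      · rw [if_neg h, if_neg (fun h' => h h'.symm), neg_zero]
    · intro v w h; dsimp only; rw [if_neg h]⟩
  map_add' a b := Subtype.ext <| funext fun v => funext fun w => by
    by_cases h : G₁.Adj v w <;> simp [h]
  map_smul' c a := Subtype.ext <| funext fun v => funext fun w => by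
    by_cases h : G₁.Adj v w <;> simp [h]

@[simp] lemma pullback_apply {G₁ : SimpleGraph U} {G₂ : SimpleGraph V} (F : G₁ →g G₂)
    (ω : edgeForms G₂) (v w : U) :
    (pullback F ω : U → U → ℝ) v w = if G₁.Adj v w then (ω : V → V → ℝ) (F v) (F w) else 0 := rfl

/-- The cycle form `ω_C ∈ Ω¹(Γ)` associated to a cyclically ordered cycle
`c : ZMod n → V` in `Γ`: value `1` on the pairs `(c i, c (i+1))`, `-1` on the reversed
pairs, and `0` elsewhere. -/
noncomputable def cycleForm {Γ : SimpleGraph V} {n : ℕ} (c : ZMod n → V)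
    (hc : ∀ i, Γ.Adj (c i) (c (i + 1))) : edgeForms Γ :=
  ⟨fun v w => (if ∃ i, c i = v ∧ c (i + 1) = w then (1 : ℝ) else 0)
      - (if ∃ i, c i = w ∧ c (i + 1) = v then (1 : ℝ) else 0), by
    constructor
    · intro v w
      dsimp only
      ring
    · intro v w h
      dsimp only
      have h1 : ¬ ∃ i, c i = v ∧ c (i + 1) = w := by
        rintro ⟨i, rfl, rfl⟩; exact h (hc i)
      have h2 : ¬ ∃ i, c i = w ∧ c (i + 1) = v := by
        rintro ⟨i, rfl, rfl⟩; exact h ((hc i).symm)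
      rw [if_neg h1, if_neg h2, sub_zero]⟩

section WalkSums
variable {Γ : SimpleGraph V} {ω : V → V → ℝ}

noncomputable def wsum (ω : V → V → ℝ) : {u v : V} → Γ.Walk u v → ℝ
  | _, _, .nil => 0
  | u, _, .cons (v := b) _ p => ω u b + wsum ω p

@[simp] lemma wsum_nil {u : V} : wsum ω (.nil : Γ.Walk u u) = 0 := rfl

@[simp] lemma wsum_cons {u v w : V} (h : Γ.Adj u v) (p : Γ.Walk v w) :
    wsum ω (.cons h p) = ω u v + wsum ω p := rfl

lemma wsum_append {u v w : V} (p : Γ.Walk u v) (q : Γ.Walk v w) :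
    wsum ω (p.append q) = wsum ω p + wsum ω q := by
  induction p with
  | nil => simp [Walk.nil_append]
  | cons h p ih => simp [Walk.cons_append, ih]; ring

lemma wsum_reverse (hω : ∀ a b, ω a b = - ω b a) {u v : V} (p : Γ.Walk u v) :
    wsum ω p.reverse = - wsum ω p := by
  induction p with
  | nil => simp
  | cons h p ih =>
    rw [Walk.reverse_cons, wsum_append, ih, wsum_cons, wsum_cons, wsum_nil]
    rw [hω _ _]; ring

lemma wsum_copy {u v u' v' : V} (p : Γ.Walk u v) (h1 : u = u') (h2 : v = v') :
    wsum ω (p.copy h1 h2) = wsum ω p := by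
  subst h1; subst h2; rw [Walk.copy_rfl_rfl]

lemma wsum_eq_sum {u v : V} (p : Γ.Walk u v) :
    wsum ω p = ∑ k ∈ Finset.range p.length, ω (p.getVert k) (p.getVert (k + 1)) := by
  induction p with
  | nil => simp
  | cons h p ih =>
    rw [wsum_cons, ih, Walk.length_cons, Finset.sum_range_succ']
    simp [Walk.getVert_cons_succ, Walk.getVert_zero]
    ring

lemma getVert_eq_support_getElem {u v : V} (p : Γ.Walk u v) {k : ℕ} (hk : k ≤ p.length) :
    p.getVert k = p.support[k]'(by rw [Walk.length_support]; omega) := by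
  induction p generalizing k with
  | nil => simp [Walk.length_nil] at hk; subst hk; simp
  | cons h q ih =>
    cases k with
    | zero => simp
    | succ k =>
      rw [Walk.getVert_cons_succ]
      simp only [Walk.support_cons, List.getElem_cons_succ]
      exact ih (by rw [Walk.length_cons] at hk; omega)

/-- A finite-index equivalence `Fin n ≃ ZMod n`. -/
noncomputable def finEquivZMod (n : ℕ) [NeZero n] : Fin n ≃ ZMod n where
  toFun k := ((k : ℕ) : ZMod n)
  invFun i := ⟨i.val, ZMod.val_lt i⟩
  left_inv k := by ext; simp [ZMod.val_cast_of_lt k.isLt]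
  right_inv i := ZMod.natCast_rightInverse i

lemma sum_zmod {n : ℕ} [NeZero n] (F : ZMod n → ℝ) :
    ∑ i : ZMod n, F i = ∑ k ∈ Finset.range n, F ((k : ℕ) : ZMod n) := by
  rw [← Fin.sum_univ_eq_sum_range (fun k => F ((k : ℕ) : ZMod n)) n]
  exact (Fintype.sum_equiv (finEquivZMod n) _ F (fun _ => rfl)).symm

/-- Split a closed walk revisiting its basepoint into two shorter nonempty closed walks. -/
lemma split_closed {u : V} (q : Γ.Walk u u) (hcount : 2 ≤ q.support.tail.count u) :
    ∃ (q1 q2 : Γ.Walk u u), wsum ω q1 + wsum ω q2 = wsum ω q ∧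
      q1.length + q2.length = q.length ∧ 0 < q1.length ∧ 0 < q2.length := by
  cases q with
  | nil => simp [Walk.support_nil] at hcount
  | cons h' q' =>
    rw [Walk.support_cons, List.tail_cons] at hcount
    have hmem' : u ∈ q'.support := by
      by_contra hm
      rw [List.count_eq_zero_of_not_mem hm] at hcount; omega
    set t := q'.takeUntil u hmem' with ht
    set d := q'.dropUntil u hmem' with hd
    have hts' : t.append d = q' := Walk.take_spec q' hmem'
    have hlen' : t.length + d.length = q'.length := by
      have := congrArg Walk.length hts'
      rwa [Walk.length_append] at this
    have hct : t.support.count u = 1 := Walk.count_support_takeUntil_eq_one q' hmem'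
    have hsupp' : q'.support = t.support ++ d.support.tail := by
      rw [← hts', Walk.support_append]
    have hdtail : 1 ≤ d.support.tail.count u := by
      rw [hsupp', List.count_append, hct] at hcount; omega
    have hdlen : 0 < d.length := by
      have hne : d.support.tail ≠ [] := by
        intro h0; rw [h0] at hdtail; simp at hdtail
      have := List.length_pos_iff.mpr hne
      rw [List.length_tail, Walk.length_support] at this; omega
    refine ⟨Walk.cons h' t, d, ?_, ?_, ?_, hdlen⟩
    · rw [wsum_cons, wsum_cons, ← hts', wsum_append]; ring
    · rw [Walk.length_cons, Walk.length_cons]; omega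
    · rw [Walk.length_cons]; omega

/-- Sum of an antisymmetric form over any closed walk vanishes, provided all
cycle sums vanish. -/
lemma wsum_closed (hω : ∀ a b, ω a b = - ω b a)
    (hcyc : ∀ (n : ℕ) [NeZero n], 3 ≤ n → ∀ c : ZMod n → V, Function.Injective c →
      (∀ i, Γ.Adj (c i) (c (i + 1))) → ∑ i : ZMod n, ω (c i) (c (i + 1)) = 0) :
    ∀ (N : ℕ) {v : V} (p : Γ.Walk v v), p.length ≤ N → wsum ω p = 0 := by
  intro N
  induction N using Nat.strong_induction_on with
  | _ N IH =>
  intro v p hp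
  rcases Nat.eq_zero_or_pos p.length with h0 | h0
  · rw [wsum_eq_sum, h0]; simp
  by_cases hnd : p.support.tail.Nodup
  · -- p visits no vertex twice except the basepoint: short cases or a genuine cycle
    set n := p.length with hn
    have hVert0 : p.getVert 0 = p.getVert n := by
      rw [Walk.getVert_zero, hn, Walk.getVert_length]
    rcases (by omega : n = 1 ∨ n = 2 ∨ 3 ≤ n) with h1 | h2 | h3
    · -- length 1: a loop, impossible
      exfalso
      have hadj := p.adj_getVert_succ (i := 0) (by omega)
      rw [show (0 + 1) = n by omega, ← hVert0] at hadj
      exact Γ.irrefl hadj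
    · -- length 2: back-and-forth
      rw [wsum_eq_sum, ← hn, h2]
      rw [Finset.sum_range_succ, Finset.sum_range_succ, Finset.sum_range_zero]
      have e2 : p.getVert 2 = p.getVert 0 := by rw [hVert0, h2]
      rw [show (1 + 1) = 2 by rfl, e2, hω (p.getVert 0) (p.getVert 1)]
      ring
    · -- length ≥ 3: a genuine cycle
      haveI : NeZero n := ⟨by omega⟩
      haveI : Fact (1 < n) := ⟨by omega⟩
      set c : ZMod n → V := fun i => p.getVert i.val with hcdef
      have hvadd : ∀ i : ZMod n, (i + 1).val = (i.val + 1) % n := by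
        intro i; rw [ZMod.val_add, ZMod.val_one]
      -- injectivity on indices 1..n
      have hkey2 : ∀ a b : ℕ, 1 ≤ a → a ≤ n → 1 ≤ b → b ≤ n →
          p.getVert a = p.getVert b → a = b := by
        intro a b ha1 ha2 hb1 hb2 hab
        rw [getVert_eq_support_getElem p (by omega), getVert_eq_support_getElem p (by omega)]
          at hab
        have hsup := p.support_eq_cons
        have htl : p.support.tail.length = n := by
          rw [List.length_tail, Walk.length_support]; omega
        have ha' : p.support.tail[a-1]'(by omega)
            = p.support[a]'(by rw [Walk.length_support]; omega) := by
          rw [List.getElem_tail]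
          congr 1
          omega
        have hb' : p.support.tail[b-1]'(by omega)
            = p.support[b]'(by rw [Walk.length_support]; omega) := by
          rw [List.getElem_tail]
          congr 1
          omega
        have hab2 := ha'.trans (hab.trans hb'.symm)
        have := (hnd.getElem_inj_iff).mp hab2
        omega
      have hinj : Function.Injective c := by
        intro i j hij
        have hiv := ZMod.val_lt i
        have hjv := ZMod.val_lt j
        apply ZMod.val_injective n
        rcases Nat.eq_zero_or_pos i.val with hi0 | hi0 <;>
          rcases Nat.eq_zero_or_pos j.val with hj0 | hj0
        · omega
        · exfalso
          have : p.getVert n = p.getVert j.val := by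
            rw [← hVert0, ← hi0]; exact hij
          have := hkey2 n j.val (by omega) le_rfl (by omega) (by omega) this
          omega
        · exfalso
          have : p.getVert i.val = p.getVert n := by
            rw [← hVert0, ← hj0]; exact hij
          have := hkey2 i.val n (by omega) (by omega) (by omega) le_rfl this
          omega
        · exact hkey2 i.val j.val (by omega) (by omega) (by omega) (by omega) hij
      have hadjc : ∀ i : ZMod n, Γ.Adj (c i) (c (i + 1)) := by
        intro i
        have hiv := ZMod.val_lt i
        show Γ.Adj (p.getVert i.val) (p.getVert (i+1).val)
        rw [hvadd i]
        by_cases hlt : i.val + 1 < n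
        · rw [Nat.mod_eq_of_lt hlt]
          exact p.adj_getVert_succ (by omega)
        · have hiv1 : i.val = n - 1 := by omega
          have hmod : (i.val + 1) % n = 0 := by
            rw [hiv1, show n - 1 + 1 = n by omega, Nat.mod_self]
          have hfin : Γ.Adj (p.getVert (n - 1)) (p.getVert (n - 1 + 1)) :=
            p.adj_getVert_succ (by omega)
          rw [show n - 1 + 1 = n by omega] at hfin
          rw [hmod, hVert0, hiv1]
          exact hfin
      have hsum := hcyc n h3 c hinj hadjc
      rw [sum_zmod] at hsum
      rw [wsum_eq_sum, ← hn, ← hsum]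
      apply Finset.sum_congr rfl
      intro k hk
      rw [Finset.mem_range] at hk
      have hck : c ((k : ℕ) : ZMod n) = p.getVert k := by
        show p.getVert (((k : ℕ) : ZMod n)).val = _
        rw [ZMod.val_cast_of_lt hk]
      have hck1 : c (((k : ℕ) : ZMod n) + 1) = p.getVert (k + 1) := by
        show p.getVert ((((k : ℕ) : ZMod n)) + 1).val = _
        rw [hvadd, ZMod.val_cast_of_lt hk]
        by_cases hlt : k + 1 < n
        · rw [Nat.mod_eq_of_lt hlt]
        · have : k + 1 = n := by omega
          rw [this, Nat.mod_self, hVert0]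
      rw [hck, hck1]
  · -- a repeated vertex: split into shorter closed walks
    obtain ⟨u, hu⟩ := List.exists_duplicate_iff_not_nodup.mpr hnd
    have hcount : 2 ≤ p.support.tail.count u := List.duplicate_iff_two_le_count.mp hu
    have humem : u ∈ p.support := List.mem_of_mem_tail hu.mem
    have hqsum : wsum ω (p.rotate u humem) = wsum ω p := by
      show wsum ω ((p.dropUntil u humem).append (p.takeUntil u humem)) = _
      rw [wsum_append]
      conv_rhs => rw [← Walk.take_spec p humem]
      rw [wsum_append]; ring
    have hqlen : (p.rotate u humem).length = p.length := by
      show ((p.dropUntil u humem).append (p.takeUntil u humem)).length = _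
      rw [Walk.length_append]
      have := congrArg Walk.length (Walk.take_spec p humem)
      rw [Walk.length_append] at this
      omega
    have hqcount : 2 ≤ (p.rotate u humem).support.tail.count u := by
      rw [List.Perm.count_eq ((Walk.support_rotate p u humem).perm)]
      exact hcount
    obtain ⟨q1, q2, hsum12, hlen12, hl1, hl2⟩ := split_closed (ω := ω) (p.rotate u humem) hqcount
    have h1 : wsum ω q1 = 0 := IH (N - 1) (by omega) q1 (by omega)
    have h2 : wsum ω q2 = 0 := IH (N - 1) (by omega) q2 (by omega)
    rw [← hqsum, ← hsum12, h1, h2, add_zero]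

end WalkSums

section Exactness
variable {Γ : SimpleGraph V}

/-- Antisymmetry of an edge form. -/
lemma edgeForms_antisymm (ω : edgeForms Γ) : ∀ v w, (ω : V → V → ℝ) v w = - (ω : V → V → ℝ) w v :=
  ω.2.1

/-- An edge form vanishes on non-adjacent pairs. -/
lemma edgeForms_not_adj (ω : edgeForms Γ) : ∀ v w, ¬ Γ.Adj v w → (ω : V → V → ℝ) v w = 0 :=
  ω.2.2

/-- A representative of the connected component of `v`. -/
noncomputable def repOf (Γ : SimpleGraph V) (v : V) : V :=
  (Γ.connectedComponentMk v).out

lemma reachable_repOf (Γ : SimpleGraph V) (v : V) : Γ.Reachable (repOf Γ v) v :=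
  SimpleGraph.ConnectedComponent.exact (Quot.out_eq _)

/-- A chosen walk from the component representative to `v`. -/
noncomputable def walkTo (Γ : SimpleGraph V) (v : V) : Γ.Walk (repOf Γ v) v :=
  Classical.choice (reachable_repOf Γ v)

/-- An edge form all of whose cycle sums vanish is a coboundary. -/
lemma mem_range_coboundary_of_cycle_sums (ω : edgeForms Γ)
    (hcyc : ∀ (n : ℕ) [NeZero n], 3 ≤ n → ∀ c : ZMod n → V, Function.Injective c →
      (∀ i, Γ.Adj (c i) (c (i + 1))) →
        ∑ i : ZMod n, (ω : V → V → ℝ) (c i) (c (i + 1)) = 0) :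
    ω ∈ LinearMap.range (coboundary Γ) := by
  have hanti := edgeForms_antisymm ω
  have hclosed : ∀ {v : V} (p : Γ.Walk v v), wsum (ω : V → V → ℝ) p = 0 := by
    intro v p
    exact wsum_closed hanti hcyc p.length p le_rfl
  refine ⟨fun v => wsum (ω : V → V → ℝ) (walkTo Γ v), ?_⟩
  apply Subtype.ext
  funext v w
  show (if Γ.Adj v w then _ - _ else 0) = (ω : V → V → ℝ) v w
  by_cases hadj : Γ.Adj v w
  · rw [if_pos hadj]
    have hrw : repOf Γ w = repOf Γ v := by
      unfold repOf
      rw [SimpleGraph.ConnectedComponent.sound hadj.symm.reachable]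
    have h0 := hclosed (((walkTo Γ v).append (Walk.cons hadj Walk.nil)).append
      ((walkTo Γ w).copy hrw rfl).reverse)
    rw [wsum_append, wsum_append, wsum_cons, wsum_nil, wsum_reverse hanti, wsum_copy] at h0
    linarith
  · rw [if_neg hadj, edgeForms_not_adj ω v w hadj]

end Exactness

section Indicators

lemma ind_diff_le_one (P Q : Prop) :
    (if P then (1 : ℝ) else 0) - (if Q then (1 : ℝ) else 0) ≤ 1 := by
  by_cases hP : P <;> by_cases hQ : Q <;> simp [hP, hQ]

lemma ind_diff_eq_one {P Q : Prop} (h : (if P then (1 : ℝ) else 0) - (if Q then (1 : ℝ) else 0) = 1) :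
    P ∧ ¬ Q := by
  by_cases hP : P <;> by_cases hQ : Q
  · rw [if_pos hP, if_pos hQ] at h; norm_num at h
  · exact ⟨hP, hQ⟩
  · rw [if_neg hP, if_pos hQ] at h; norm_num at h
  · rw [if_neg hP, if_neg hQ] at h; norm_num at h

end Indicators

section CycleLemmas
variable {Γ : SimpleGraph V}

lemma cycleForm_coe {n : ℕ} (c : ZMod n → V) (hc : ∀ i, Γ.Adj (c i) (c (i + 1))) (v w : V) :
    (cycleForm c hc : V → V → ℝ) v w =
      (if ∃ i, c i = v ∧ c (i + 1) = w then (1 : ℝ) else 0)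
        - (if ∃ i, c i = w ∧ c (i + 1) = v then (1 : ℝ) else 0) := rfl

lemma cycleForm_apply_self {n : ℕ} [NeZero n] (hn3 : 3 ≤ n) {c : ZMod n → V}
    (hinj : Function.Injective c) (hc : ∀ i, Γ.Adj (c i) (c (i + 1))) (i : ZMod n) :
    (cycleForm c hc : V → V → ℝ) (c i) (c (i + 1)) = 1 := by
  rw [cycleForm_coe, if_pos ⟨i, rfl, rfl⟩, if_neg, sub_zero]
  rintro ⟨j, hj1, hj2⟩
  have hji : j = i + 1 := hinj hj1
  subst hji
  have h2 : i + 1 + 1 = i := hinj hj2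
  have h0 : (1 : ZMod n) + 1 = 0 := by
    have := h2
    rw [add_assoc] at this
    exact (add_eq_left).mp this
  have h2' : ((2 : ℕ) : ZMod n) = 0 := by push_cast; rw [← h0]; ring
  have hdvd := (ZMod.natCast_eq_zero_iff 2 n).mp h2'
  have := Nat.le_of_dvd (by norm_num) hdvd
  omega

/-- If `g` fixes the cycle form of `c`, then `g` shifts `c`: each successive pair of `c`
is mapped to a successive pair of `c`. -/
lemma exists_shift_of_fixed (g : Γ ≃g Γ) {n : ℕ} [NeZero n] (hn3 : 3 ≤ n) {c : ZMod n → V}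
    (hinj : Function.Injective c) (hc : ∀ i, Γ.Adj (c i) (c (i + 1)))
    (hall : ∀ i : ZMod n,
      (pullback g.toHom (cycleForm c hc) : V → V → ℝ) (c i) (c (i + 1)) = 1) :
    ∀ i, ∃ j, c j = g.toHom (c i) ∧ c (j + 1) = g.toHom (c (i + 1)) := by
  intro i
  have h1 := hall i
  rw [pullback_apply, if_pos (hc i), cycleForm_coe] at h1
  exact (ind_diff_eq_one h1).1

lemma fixed_of_shift (g : Γ ≃g Γ) {n : ℕ} [NeZero n] {c : ZMod n → V}
    (hinj : Function.Injective c) (hc : ∀ i, Γ.Adj (c i) (c (i + 1)))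
    (hshift : ∀ i, ∃ j, c j = g.toHom (c i) ∧ c (j + 1) = g.toHom (c (i + 1))) :
    pullback g.toHom (cycleForm c hc) = cycleForm c hc := by
  have hginj : Function.Injective (g.toHom : V → V) := fun a b hab => g.injective hab
  choose J hJ1 hJ2 using hshift
  have hJinj : Function.Injective J := by
    intro a b hab
    apply hinj
    apply hginj
    rw [← hJ1 a, ← hJ1 b, hab]
  have hJsurj : Function.Surjective J := (Finite.injective_iff_bijective.mp hJinj).2
  have hiff : ∀ a b : V,
      (∃ j, c j = g.toHom a ∧ c (j + 1) = g.toHom b) ↔ (∃ i, c i = a ∧ c (i + 1) = b) := by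
    intro a b
    constructor
    · rintro ⟨j, h1, h2⟩
      obtain ⟨i, rfl⟩ := hJsurj j
      exact ⟨i, hginj ((hJ1 i).symm.trans h1), hginj ((hJ2 i).symm.trans h2)⟩
    · rintro ⟨i, rfl, rfl⟩
      exact ⟨J i, hJ1 i, hJ2 i⟩
  apply Subtype.ext
  funext v w
  rw [pullback_apply]
  by_cases hadj : Γ.Adj v w
  · rw [if_pos hadj, cycleForm_coe, cycleForm_coe]
    exact congrArg₂ (· - ·)
      (@if_congr _ _ _ (Classical.propDecidable _) (Classical.propDecidable _) _ _ _ _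
        (hiff v w) rfl rfl)
      (@if_congr _ _ _ (Classical.propDecidable _) (Classical.propDecidable _) _ _ _ _
        (hiff w v) rfl rfl)
  · rw [if_neg hadj, edgeForms_not_adj (cycleForm c hc) v w hadj]

end CycleLemmas

/-- The induced action of an automorphism `g` on `H¹(Γ)` is the identity
iff `g` restricts to a rotation on each cycle of `Γ`, i.e. iff for every cycle subgraph
of `Γ`, given by an injective cyclic sequence `c : ZMod n → V` (`n ≥ 3`) of successively
adjacent vertices, the associated cycle form is fixed: `g*ω_C = ω_C`. -/
theorem H1_action_trivial_iff_rotation_on_cycles [Fintype V]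
    (Γ : SimpleGraph V) (g : Γ ≃g Γ) :
    (∀ ω : edgeForms Γ, pullback g.toHom ω - ω ∈ LinearMap.range (coboundary Γ)) ↔
      (∀ (n : ℕ), 3 ≤ n → ∀ (c : ZMod n → V), Function.Injective c →
        ∀ (hc : ∀ i, Γ.Adj (c i) (c (i + 1))),
          pullback g.toHom (cycleForm c hc) = cycleForm c hc) := by
  constructor
  · -- forward: trivial action on H¹ implies every cycle form is fixed
    intro h n hn3 c hinj hc
    haveI : NeZero n := ⟨by omega⟩
    obtain ⟨f, hf⟩ := h (cycleForm c hc)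
    have hval : ∀ v w : V, (if Γ.Adj v w then f w - f v else 0)
        = (pullback g.toHom (cycleForm c hc) : V → V → ℝ) v w
          - (cycleForm c hc : V → V → ℝ) v w := by
      intro v w
      have h1 := congrFun (congrFun (congrArg Subtype.val hf) v) w
      rw [Submodule.coe_sub] at h1
      exact h1
    have htel : ∑ i : ZMod n,
        (if Γ.Adj (c i) (c (i + 1)) then f (c (i + 1)) - f (c i) else 0) = 0 := by
      have : ∀ i : ZMod n, (if Γ.Adj (c i) (c (i + 1)) then f (c (i + 1)) - f (c i) else 0)
          = f (c (i + 1)) - f (c i) := fun i => if_pos (hc i)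
      rw [Finset.sum_congr rfl (fun i _ => this i), Finset.sum_sub_distrib]
      rw [Fintype.sum_equiv (Equiv.addRight (1 : ZMod n)) (fun i => f (c (i + 1)))
        (fun i => f (c i)) (fun i => rfl)]
      ring
    have hsum2 : ∑ i : ZMod n, (pullback g.toHom (cycleForm c hc) : V → V → ℝ) (c i) (c (i + 1))
        = ∑ i : ZMod n, (cycleForm c hc : V → V → ℝ) (c i) (c (i + 1)) := by
      have := Finset.sum_congr rfl (fun (i : ZMod n) (_ : i ∈ Finset.univ) => hval (c i) (c (i + 1)))
      rw [htel, Finset.sum_sub_distrib] at this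
      linarith [this]
    have hall : ∀ i : ZMod n,
        (pullback g.toHom (cycleForm c hc) : V → V → ℝ) (c i) (c (i + 1)) = 1 := by
      by_contra hx
      push_neg at hx
      obtain ⟨i0, hi0⟩ := hx
      have hbound : ∀ i : ZMod n,
          (pullback g.toHom (cycleForm c hc) : V → V → ℝ) (c i) (c (i + 1)) ≤ 1 := by
        intro i
        rw [pullback_apply, if_pos (hc i), cycleForm_coe]
        exact ind_diff_le_one _ _
      have hlt := Finset.sum_lt_sum (f := fun i : ZMod n =>
          (pullback g.toHom (cycleForm c hc) : V → V → ℝ) (c i) (c (i + 1)))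
        (g := fun _ : ZMod n => (1 : ℝ))
        (fun i _ => hbound i) ⟨i0, Finset.mem_univ _, lt_of_le_of_ne (hbound i0) hi0⟩
      rw [hsum2, Finset.sum_congr rfl
        (fun (i : ZMod n) _ => cycleForm_apply_self hn3 hinj hc i)] at hlt
      exact lt_irrefl _ hlt
    exact fixed_of_shift g hinj hc (exists_shift_of_fixed g hn3 hinj hc hall)
  · -- reverse: if every cycle form is fixed, the action on H¹ is trivial
    intro h ω
    apply mem_range_coboundary_of_cycle_sums
    intro n _ hn3 c hinj hc
    have hfix := h n hn3 c hinj hc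
    have hall : ∀ i : ZMod n,
        (pullback g.toHom (cycleForm c hc) : V → V → ℝ) (c i) (c (i + 1)) = 1 := by
      intro i
      rw [hfix]
      exact cycleForm_apply_self hn3 hinj hc i
    have hshift := exists_shift_of_fixed g hn3 hinj hc hall
    choose J hJ1 hJ2 using hshift
    have hginj : Function.Injective (g.toHom : V → V) := fun a b hab => g.injective hab
    have hJinj : Function.Injective J := by
      intro a b hab
      apply hinj; apply hginj
      rw [← hJ1 a, ← hJ1 b, hab]
    have hJbij : Function.Bijective J := Finite.injective_iff_bijective.mp hJinj
    have hterm : ∀ i : ZMod n,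
        ((pullback g.toHom ω - ω : edgeForms Γ) : V → V → ℝ) (c i) (c (i + 1))
          = (ω : V → V → ℝ) (c (J i)) (c (J i + 1)) - (ω : V → V → ℝ) (c i) (c (i + 1)) := by
      intro i
      rw [Submodule.coe_sub]
      show (pullback g.toHom ω : V → V → ℝ) _ _ - (ω : V → V → ℝ) _ _ = _
      rw [pullback_apply, if_pos (hc i), ← hJ1 i, ← hJ2 i]
    rw [Finset.sum_congr rfl (fun (i : ZMod n) _ => hterm i), Finset.sum_sub_distrib,
      Function.Bijective.sum_comp hJbij (fun j => (ω : V → V → ℝ) (c j) (c (j + 1))), sub_self]
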